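/- Define L(ρ, α, ρ₀) = √( ((1-ρ₀)^{1-sin α} (1+ρ₀)^{1+sin α}) / ((1-ρ)^{1-sin α} (1+ρ)^{1+sin α}) ) for ρ, ρ₀ ∈ (-1,1) and α ∈ (0, π/2), and δ(ρ₁, ρ₂, α, ρ₀) = log( sup_{ρ₁<ρ<ρ₂} L(ρ,α,ρ₀) / inf_{ρ₁<ρ<ρ₂} L(ρ,α,ρ₀) ). For fixed -1 < ρ₁ < ρ₂ < 1 with ρ₀ = ρ₁, the distortion δ(ρ₁, ρ₂, α, ρ₁) attains its minimum over α ∈ (0, π/2) at α = α₀ if and only if L(ρ₂, α₀, ρ₁) = 1; and in that case ρ₁ < sin α₀ < ρ₂. -/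

import Mathlib

open Real

/-- The infinitesimal Lipschitz constant of the normalized Lambert conical projection. -/
noncomputable def L (ρ α ρ₀ : ℝ) : ℝ :=
  Real.sqrt (((1 - ρ₀) ^ (1 - Real.sin α) * (1 + ρ₀) ^ (1 + Real.sin α)) /
    ((1 - ρ) ^ (1 - Real.sin α) * (1 + ρ) ^ (1 + Real.sin α)))

/-- The distortion `δ(ρ₁,ρ₂,α,ρ₀) = log(sup L / inf L)` over `ρ ∈ (ρ₁,ρ₂)`. -/
noncomputable def δ (ρ₁ ρ₂ α ρ₀ : ℝ) : ℝ :=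
  Real.log (sSup ((fun ρ => L ρ α ρ₀) '' Set.Ioo ρ₁ ρ₂) /
    sInf ((fun ρ => L ρ α ρ₀) '' Set.Ioo ρ₁ ρ₂))


open Set Filter

set_option linter.unusedSectionVars false


/-- log of L with ρ₀ = p, sin α = s. -/
noncomputable def Fn (p s ρ : ℝ) : ℝ :=
  ((1 - s) * (Real.log (1 - p) - Real.log (1 - ρ)) +
   (1 + s) * (Real.log (1 + p) - Real.log (1 + ρ))) / 2

lemma L_eq_exp {p ρ : ℝ} (α : ℝ) (hp1 : -1 < p) (hp2 : p < 1) (hr1 : -1 < ρ) (hr2 : ρ < 1) :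
    L ρ α p = Real.exp (Fn p (Real.sin α) ρ) := by
  have h1p : (0:ℝ) < 1 - p := by linarith
  have h2p : (0:ℝ) < 1 + p := by linarith
  have h1r : (0:ℝ) < 1 - ρ := by linarith
  have h2r : (0:ℝ) < 1 + ρ := by linarith
  set s := Real.sin α with hs
  have hA : 0 < (1 - p) ^ (1 - s) * (1 + p) ^ (1 + s) :=
    mul_pos (Real.rpow_pos_of_pos h1p _) (Real.rpow_pos_of_pos h2p _)
  have hB : 0 < (1 - ρ) ^ (1 - s) * (1 + ρ) ^ (1 + s) :=
    mul_pos (Real.rpow_pos_of_pos h1r _) (Real.rpow_pos_of_pos h2r _)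
  have hAB : 0 < (1 - p) ^ (1 - s) * (1 + p) ^ (1 + s) /
      ((1 - ρ) ^ (1 - s) * (1 + ρ) ^ (1 + s)) := div_pos hA hB
  rw [L, Real.sqrt_eq_rpow, Real.rpow_def_of_pos hAB, Real.log_div hA.ne' hB.ne',
    Real.log_mul (Real.rpow_pos_of_pos h1p _).ne' (Real.rpow_pos_of_pos h2p _).ne',
    Real.log_mul (Real.rpow_pos_of_pos h1r _).ne' (Real.rpow_pos_of_pos h2r _).ne',
    Real.log_rpow h1p, Real.log_rpow h2p, Real.log_rpow h1r, Real.log_rpow h2r]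
  rw [Fn]
  ring_nf

lemma hasDerivAt_Fn_rho (p s : ℝ) {ρ : ℝ} (h1 : -1 < ρ) (h2 : ρ < 1) :
    HasDerivAt (Fn p s) (((1 - s) / (1 - ρ) - (1 + s) / (1 + ρ)) / 2) ρ := by
  have h1' : (1:ℝ) - ρ ≠ 0 := by linarith
  have h2' : (1:ℝ) + ρ ≠ 0 := by linarith
  have d1 : HasDerivAt (fun x : ℝ => Real.log (1 - x)) (-1 / (1 - ρ)) ρ := by
    have : HasDerivAt (fun x : ℝ => 1 - x) (-1) ρ := by
      simpa using (hasDerivAt_id ρ).const_sub 1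
    simpa using this.log h1'
  have d2 : HasDerivAt (fun x : ℝ => Real.log (1 + x)) (1 / (1 + ρ)) ρ := by
    have : HasDerivAt (fun x : ℝ => 1 + x) (1) ρ := by
      simpa using (hasDerivAt_id ρ).const_add 1
    simpa using this.log h2'
  have := (((d1.const_sub (Real.log (1 - p))).const_mul (1 - s)).add
      ((d2.const_sub (Real.log (1 + p))).const_mul (1 + s))).div_const 2
  refine HasDerivAt.congr_deriv this ?_
  ring



lemma le_csSup_closure {f : ℝ → ℝ} {s : Set ℝ} {x : ℝ} (hx : x ∈ closure s)
    (hf : ContinuousAt f x) (hb : BddAbove (f '' s)) : f x ≤ sSup (f '' s) := by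
  have hne : (nhdsWithin x s).NeBot := mem_closure_iff_nhdsWithin_neBot.mp hx
  have htend : Filter.Tendsto f (nhdsWithin x s) (nhds (f x)) := hf.continuousWithinAt
  refine le_of_tendsto htend ?_
  filter_upwards [self_mem_nhdsWithin] with y hy
  exact le_csSup hb (Set.mem_image_of_mem f hy)

lemma csInf_le_closure {f : ℝ → ℝ} {s : Set ℝ} {x : ℝ} (hx : x ∈ closure s)
    (hf : ContinuousAt f x) (hb : BddBelow (f '' s)) : sInf (f '' s) ≤ f x := by
  have hne : (nhdsWithin x s).NeBot := mem_closure_iff_nhdsWithin_neBot.mp hx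
  have htend : Filter.Tendsto f (nhdsWithin x s) (nhds (f x)) := hf.continuousWithinAt
  refine ge_of_tendsto htend ?_
  filter_upwards [self_mem_nhdsWithin] with y hy
  exact csInf_le hb (Set.mem_image_of_mem f hy)



section Mono
variable {p q s : ℝ} (h1 : -1 < p) (h2 : p < q) (h3 : q < 1)

lemma Fn_contAt {ρ : ℝ} (hρ1 : -1 < ρ) (hρ2 : ρ < 1) : ContinuousAt (Fn p s) ρ :=
  (hasDerivAt_Fn_rho p s hρ1 hρ2).continuousAt

include h1 h2 h3

lemma deriv_Fn_eq {ρ : ℝ} (hρ1 : -1 < ρ) (hρ2 : ρ < 1) :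
    deriv (Fn p s) ρ = (ρ - s) / ((1 - ρ) * (1 + ρ)) := by
  rw [(hasDerivAt_Fn_rho p s hρ1 hρ2).deriv]
  have e1 : (1:ℝ) - ρ ≠ 0 := by linarith
  have e2 : (1:ℝ) + ρ ≠ 0 := by linarith
  field_simp
  ring

lemma Fn_anti : AntitoneOn (Fn p s) (Icc p (max p (min s q))) := by
  set c := max p (min s q) with hc
  have hcq : c ≤ q := max_le h2.le (min_le_right _ _)
  refine StrictAntiOn.antitoneOn (strictAntiOn_of_deriv_neg (convex_Icc _ _) ?_ ?_)
  · intro x hx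
    exact (Fn_contAt (by linarith [hx.1]) (by linarith [hx.2, hcq])).continuousWithinAt
  · intro x hx
    rw [interior_Icc] at hx
    have hx1 : -1 < x := by linarith [hx.1]
    have hx2 : x < 1 := by linarith [hx.2, hcq]
    have hxs : x < s := by
      rcases lt_max_iff.mp hx.2 with h | h
      · linarith [hx.1]
      · exact lt_of_lt_of_le h (min_le_left _ _)
    rw [deriv_Fn_eq h1 h2 h3 hx1 hx2]
    apply div_neg_of_neg_of_pos (by linarith)
    have : (0:ℝ) < 1 - x := by linarith
    have : (0:ℝ) < 1 + x := by linarith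
    positivity

lemma Fn_mono : MonotoneOn (Fn p s) (Icc (max p (min s q)) q) := by
  set c := max p (min s q) with hc
  have hpc : p ≤ c := le_max_left _ _
  refine StrictMonoOn.monotoneOn (strictMonoOn_of_deriv_pos (convex_Icc _ _) ?_ ?_)
  · intro x hx
    exact (Fn_contAt (by linarith [hx.1, hpc]) (by linarith [hx.2])).continuousWithinAt
  · intro x hx
    rw [interior_Icc] at hx
    have hx1 : -1 < x := by linarith [hx.1, hpc]
    have hx2 : x < 1 := by linarith [hx.2]
    have hxs : s < x := by
      have := hx.1
      rcases min_lt_iff.mp (lt_of_le_of_lt (le_max_right p (min s q)) this) with h | h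
      · exact h
      · linarith [hx.2]
    rw [deriv_Fn_eq h1 h2 h3 hx1 hx2]
    apply div_pos (by linarith)
    have : (0:ℝ) < 1 - x := by linarith
    have : (0:ℝ) < 1 + x := by linarith
    positivity


omit h1 h2 h3 in
lemma Fn_self : Fn p s p = 0 := by simp [Fn]

lemma Fn_bound : ∀ y ∈ Fn p s '' Ioo p q, y ≤ max (Fn p s p) (Fn p s q) := by
  rintro y ⟨ρ, hρ, rfl⟩
  set c := max p (min s q) with hc
  have hpc : p ≤ c := le_max_left _ _
  have hcq : c ≤ q := max_le h2.le (min_le_right _ _)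
  rcases le_or_gt ρ c with h | h
  · exact le_max_of_le_left (Fn_anti h1 h2 h3 ⟨le_refl _, hpc⟩ ⟨hρ.1.le, h⟩ hρ.1.le)
  · exact le_max_of_le_right (Fn_mono h1 h2 h3 ⟨h.le, hρ.2.le⟩ ⟨hcq, le_refl _⟩ hρ.2.le)

lemma Fn_lbound : ∀ y ∈ Fn p s '' Ioo p q, Fn p s (max p (min s q)) ≤ y := by
  rintro y ⟨ρ, hρ, rfl⟩
  set c := max p (min s q) with hc
  have hpc : p ≤ c := le_max_left _ _
  have hcq : c ≤ q := max_le h2.le (min_le_right _ _)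
  rcases le_or_gt ρ c with h | h
  · exact Fn_anti h1 h2 h3 ⟨hρ.1.le, h⟩ ⟨hpc, le_refl _⟩ h
  · exact Fn_mono h1 h2 h3 ⟨le_refl _, hcq⟩ ⟨h.le, hρ.2.le⟩ h.le

lemma Fn_image_nonempty : (Fn p s '' Ioo p q).Nonempty :=
  (Set.nonempty_Ioo.mpr h2).image _

lemma sSup_Fn : sSup (Fn p s '' Ioo p q) = max (Fn p s p) (Fn p s q) := by
  have hbdd : BddAbove (Fn p s '' Ioo p q) := ⟨_, Fn_bound h1 h2 h3⟩
  refine le_antisymm (csSup_le (Fn_image_nonempty h1 h2 h3) (Fn_bound h1 h2 h3)) ?_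
  have hclo : closure (Ioo p q) = Icc p q := closure_Ioo h2.ne
  refine max_le ?_ ?_
  · exact le_csSup_closure (by rw [hclo]; exact ⟨le_refl _, h2.le⟩) (Fn_contAt h1 (by linarith)) hbdd
  · exact le_csSup_closure (by rw [hclo]; exact ⟨h2.le, le_refl _⟩) (Fn_contAt (by linarith) h3) hbdd

lemma sInf_Fn : sInf (Fn p s '' Ioo p q) = Fn p s (max p (min s q)) := by
  have hbdd : BddBelow (Fn p s '' Ioo p q) := ⟨_, Fn_lbound h1 h2 h3⟩
  have hpc : p ≤ max p (min s q) := le_max_left _ _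
  have hcq : max p (min s q) ≤ q := max_le h2.le (min_le_right _ _)
  refine le_antisymm ?_ (le_csInf (Fn_image_nonempty h1 h2 h3) (Fn_lbound h1 h2 h3))
  have hclo : closure (Ioo p q) = Icc p q := closure_Ioo h2.ne
  exact csInf_le_closure (by rw [hclo]; exact ⟨hpc, hcq⟩)
    (Fn_contAt (by linarith) (by linarith)) hbdd


lemma delta_eq (α : ℝ) :
    δ p q α p = max 0 (Fn p (Real.sin α) q)
      - Fn p (Real.sin α) (max p (min (Real.sin α) q)) := by
  set s := Real.sin α with hs
  have himg : (fun ρ => L ρ α p) '' Ioo p q = Real.exp '' (Fn p s '' Ioo p q) := by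
    rw [Set.image_image]
    refine Set.image_congr fun ρ hρ => ?_
    exact L_eq_exp α h1 (by linarith) (by linarith [hρ.1]) (by linarith [hρ.2])
  have hne := Fn_image_nonempty (s := s) h1 h2 h3
  have hbdd : BddAbove (Fn p s '' Ioo p q) := ⟨_, Fn_bound h1 h2 h3⟩
  have hbddb : BddBelow (Fn p s '' Ioo p q) := ⟨_, Fn_lbound h1 h2 h3⟩
  rw [δ, himg,
    ← Real.exp_monotone.map_csSup_of_continuousAt (Real.continuous_exp.continuousAt) hne hbdd,
    ← Real.exp_monotone.map_csInf_of_continuousAt (Real.continuous_exp.continuousAt) hne hbddb,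
    ← Real.exp_sub, Real.log_exp, sSup_Fn h1 h2 h3, sInf_Fn h1 h2 h3, Fn_self]


end Mono


noncomputable def aa (p q : ℝ) : ℝ := Real.log (1 - p) - Real.log (1 - q)
noncomputable def bb (p q : ℝ) : ℝ := Real.log (1 + q) - Real.log (1 + p)
noncomputable def sstar (p q : ℝ) : ℝ := (aa p q - bb p q) / (aa p q + bb p q)

section S
variable {p q : ℝ} (h1 : -1 < p) (h2 : p < q) (h3 : q < 1)
include h1 h2 h3

lemma aa_pos : 0 < aa p q := by
  have : Real.log (1 - q) < Real.log (1 - p) := Real.log_lt_log (by linarith) (by linarith)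
  simpa [aa] using sub_pos.mpr this

lemma bb_pos : 0 < bb p q := by
  have : Real.log (1 + p) < Real.log (1 + q) := Real.log_lt_log (by linarith) (by linarith)
  simpa [bb] using sub_pos.mpr this

lemma e2_affine (s : ℝ) :
    Fn p s q = (aa p q + bb p q) / 2 * (sstar p q - s) := by
  have hab : aa p q + bb p q ≠ 0 := (add_pos (aa_pos h1 h2 h3) (bb_pos h1 h2 h3)).ne'
  simp only [Fn, aa, bb, sstar] at *
  field_simp
  ring

lemma e2_strictAnti : StrictAnti (fun s => Fn p s q) := by
  intro s t hst
  have ha := aa_pos h1 h2 h3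
  have hb := bb_pos h1 h2 h3
  simp only [Fn, aa, bb] at *
  nlinarith [mul_pos (sub_pos.mpr hst) (add_pos ha hb)]

lemma e2_p_pos : 0 < Fn p p q := by
  have h1p : (0:ℝ) < 1 - p := by linarith
  have h2p : (0:ℝ) < 1 + p := by linarith
  have h1q : (0:ℝ) < 1 - q := by linarith
  have h2q : (0:ℝ) < 1 + q := by linarith
  have key1 : Real.log ((1 - q) / (1 - p)) < (1 - q) / (1 - p) - 1 :=
    Real.log_lt_sub_one_of_pos (by positivity) ((div_lt_one h1p).mpr (by linarith)).ne
  have key2 : Real.log ((1 + q) / (1 + p)) < (1 + q) / (1 + p) - 1 :=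
    Real.log_lt_sub_one_of_pos (by positivity) ((one_lt_div h2p).mpr (by linarith)).ne'
  rw [Real.log_div h1q.ne' h1p.ne'] at key1
  rw [Real.log_div h2q.ne' h2p.ne'] at key2
  have k1 : (1 - p) * (Real.log (1 - q) - Real.log (1 - p)) < (1 - q) - (1 - p) := by
    have := (mul_lt_mul_of_pos_left key1 h1p)
    calc (1 - p) * (Real.log (1 - q) - Real.log (1 - p)) < (1 - p) * ((1 - q)/(1 - p) - 1) := this
    _ = (1 - q) - (1 - p) := by field_simp
  have k2 : (1 + p) * (Real.log (1 + q) - Real.log (1 + p)) < (1 + q) - (1 + p) := by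
    have := (mul_lt_mul_of_pos_left key2 h2p)
    calc (1 + p) * (Real.log (1 + q) - Real.log (1 + p)) < (1 + p) * ((1 + q)/(1 + p) - 1) := this
    _ = (1 + q) - (1 + p) := by field_simp
  simp only [Fn]
  nlinarith [k1, k2]

lemma e2_q_neg : Fn p q q < 0 := by
  have h1p : (0:ℝ) < 1 - p := by linarith
  have h2p : (0:ℝ) < 1 + p := by linarith
  have h1q : (0:ℝ) < 1 - q := by linarith
  have h2q : (0:ℝ) < 1 + q := by linarith
  have key1 : Real.log ((1 - p) / (1 - q)) < (1 - p) / (1 - q) - 1 :=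
    Real.log_lt_sub_one_of_pos (by positivity) ((one_lt_div h1q).mpr (by linarith)).ne'
  have key2 : Real.log ((1 + p) / (1 + q)) < (1 + p) / (1 + q) - 1 :=
    Real.log_lt_sub_one_of_pos (by positivity) ((div_lt_one h2q).mpr (by linarith)).ne
  rw [Real.log_div h1p.ne' h1q.ne'] at key1
  rw [Real.log_div h2p.ne' h2q.ne'] at key2
  have k1 : (1 - q) * (Real.log (1 - p) - Real.log (1 - q)) < (1 - p) - (1 - q) := by
    have := (mul_lt_mul_of_pos_left key1 h1q)
    calc (1 - q) * (Real.log (1 - p) - Real.log (1 - q)) < (1 - q) * ((1 - p)/(1 - q) - 1) := this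
    _ = (1 - p) - (1 - q) := by field_simp
  have k2 : (1 + q) * (Real.log (1 + p) - Real.log (1 + q)) < (1 + p) - (1 + q) := by
    have := (mul_lt_mul_of_pos_left key2 h2q)
    calc (1 + q) * (Real.log (1 + p) - Real.log (1 + q)) < (1 + q) * ((1 + p)/(1 + q) - 1) := this
    _ = (1 + p) - (1 + q) := by field_simp
  simp only [Fn]
  nlinarith [k1, k2]

lemma sstar_gt : p < sstar p q := by
  have ha := aa_pos h1 h2 h3
  have hb := bb_pos h1 h2 h3
  have := e2_p_pos h1 h2 h3
  rw [e2_affine h1 h2 h3] at this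
  nlinarith

lemma sstar_lt : sstar p q < q := by
  have ha := aa_pos h1 h2 h3
  have hb := bb_pos h1 h2 h3
  have := e2_q_neg h1 h2 h3
  rw [e2_affine h1 h2 h3] at this
  nlinarith

end S



noncomputable def hh (p s : ℝ) : ℝ := -(Fn p s s)
noncomputable def GG (p q s : ℝ) : ℝ := Fn p s q + hh p s

lemma hasDerivAt_hh (p : ℝ) {s : ℝ} (hs1 : -1 < s) (hs2 : s < 1) :
    HasDerivAt (hh p)
      (((Real.log (1 + s) - Real.log (1 - s)) - (Real.log (1 + p) - Real.log (1 - p))) / 2) s := by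
  have h1' : (1:ℝ) - s ≠ 0 := by linarith
  have h2' : (1:ℝ) + s ≠ 0 := by linarith
  have d1 : HasDerivAt (fun x : ℝ => Real.log (1 - x)) (-1 / (1 - s)) s := by
    have : HasDerivAt (fun x : ℝ => 1 - x) (-1) s := by
      simpa using (hasDerivAt_id s).const_sub 1
    simpa using this.log h1'
  have d2 : HasDerivAt (fun x : ℝ => Real.log (1 + x)) (1 / (1 + s)) s := by
    have : HasDerivAt (fun x : ℝ => 1 + x) (1) s := by
      simpa using (hasDerivAt_id s).const_add 1
    simpa using this.log h2'
  have l1 : HasDerivAt (fun x : ℝ => 1 - x) (-1) s := by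
    simpa using (hasDerivAt_id s).const_sub 1
  have l2 : HasDerivAt (fun x : ℝ => 1 + x) (1) s := by
    simpa using (hasDerivAt_id s).const_add 1
  have m1 : HasDerivAt (fun x : ℝ => (1 - x) * (Real.log (1 - p) - Real.log (1 - x)))
      ((-1) * (Real.log (1 - p) - Real.log (1 - s)) + (1 - s) * (0 - (-1 / (1 - s)))) s :=
    l1.mul ((hasDerivAt_const s (Real.log (1 - p))).sub d1)
  have m2 : HasDerivAt (fun x : ℝ => (1 + x) * (Real.log (1 + p) - Real.log (1 + x)))
      (1 * (Real.log (1 + p) - Real.log (1 + s)) + (1 + s) * (0 - 1 / (1 + s))) s :=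
    l2.mul ((hasDerivAt_const s (Real.log (1 + p))).sub d2)
  have := ((m1.add m2).div_const 2).neg
  have heq : hh p = fun x : ℝ => -(((1 - x) * (Real.log (1 - p) - Real.log (1 - x)) +
      (1 + x) * (Real.log (1 + p) - Real.log (1 + x))) / 2) := by
    funext x; simp [hh, Fn]
  rw [heq]
  refine HasDerivAt.congr_deriv this ?_
  field_simp
  ring

lemma hh_self (p : ℝ) : hh p p = 0 := by simp [hh, Fn]

section S
variable {p q : ℝ} (h1 : -1 < p) (h2 : p < q) (h3 : q < 1)

lemma hh_contAt {s : ℝ} (hs1 : -1 < s) (hs2 : s < 1) : ContinuousAt (hh p) s :=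
  (hasDerivAt_hh p hs1 hs2).continuousAt

include h1 in
lemma hh_strictMono : StrictMonoOn (hh p) (Ico p 1) := by
  refine strictMonoOn_of_deriv_pos (convex_Ico _ _) ?_ ?_
  · intro x hx
    exact (hh_contAt (by linarith [hx.1]) hx.2).continuousWithinAt
  · intro x hx
    rw [interior_Ico] at hx
    have hx1 : -1 < x := by linarith [hx.1]
    rw [(hasDerivAt_hh p hx1 hx.2).deriv]
    have g1 : Real.log (1 + p) < Real.log (1 + x) :=
      Real.log_lt_log (by linarith) (by linarith [hx.1])
    have g2 : Real.log (1 - x) < Real.log (1 - p) :=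
      Real.log_lt_log (by linarith [hx.2]) (by linarith [hx.1])
    linarith

include h1 h2 h3 in
lemma GG_strictAnti : StrictAntiOn (GG p q) (Icc p q) := by
  have hd : ∀ x ∈ Set.Ioo (-1:ℝ) 1, HasDerivAt (GG p q)
      (((Real.log (1 + x) - Real.log (1 - x)) - (Real.log (1 + q) - Real.log (1 - q))) / 2) x := by
    intro x hx
    have dfn : HasDerivAt (fun s => Fn p s q)
        ((-1) * (Real.log (1 - p) - Real.log (1 - q)) / 2 +
         1 * (Real.log (1 + p) - Real.log (1 + q)) / 2) x := by
      simp only [Fn]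
      have l1 : HasDerivAt (fun s : ℝ => 1 - s) (-1) x := by
        simpa using (hasDerivAt_id x).const_sub 1
      have l2 : HasDerivAt (fun s : ℝ => 1 + s) (1) x := by
        simpa using (hasDerivAt_id x).const_add 1
      exact (((l1.mul_const _).add (l2.mul_const _)).div_const 2).congr_deriv (by ring)
    have hsum := dfn.add (hasDerivAt_hh p hx.1 hx.2)
    exact hsum.congr_deriv (by ring)
  refine strictAntiOn_of_deriv_neg (convex_Icc _ _) ?_ ?_
  · intro x hx
    exact ((hd x ⟨by linarith [hx.1], by linarith [hx.2]⟩).continuousAt).continuousWithinAt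
  · intro x hx
    rw [interior_Icc] at hx
    rw [(hd x ⟨by linarith [hx.1], by linarith [hx.2]⟩).deriv]
    have g1 : Real.log (1 + x) < Real.log (1 + q) :=
      Real.log_lt_log (by linarith [hx.1]) (by linarith [hx.2])
    have g2 : Real.log (1 - q) < Real.log (1 - x) :=
      Real.log_lt_log (by linarith) (by linarith [hx.2])
    linarith

end S



noncomputable def Dl (p q s : ℝ) : ℝ := max 0 (Fn p s q) - Fn p s (max p (min s q))



section S2
variable {p q : ℝ} (h1 : -1 < p) (h2 : p < q) (h3 : q < 1)
include h1 h2 h3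


lemma e2_nonpos {s : ℝ} (h : sstar p q ≤ s) : Fn p s q ≤ 0 := by
  rw [e2_affine h1 h2 h3]
  have ha := aa_pos h1 h2 h3; have hb := bb_pos h1 h2 h3
  apply mul_nonpos_of_nonneg_of_nonpos (by positivity) (by linarith)

lemma e2_neg {s : ℝ} (h : sstar p q < s) : Fn p s q < 0 := by
  rw [e2_affine h1 h2 h3]
  have ha := aa_pos h1 h2 h3; have hb := bb_pos h1 h2 h3
  apply mul_neg_of_pos_of_neg (by positivity) (by linarith)

lemma e2_nonneg {s : ℝ} (h : s ≤ sstar p q) : 0 ≤ Fn p s q := by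
  rw [e2_affine h1 h2 h3]
  have ha := aa_pos h1 h2 h3; have hb := bb_pos h1 h2 h3
  apply mul_nonneg (by positivity) (by linarith)

lemma e2_pos {s : ℝ} (h : s < sstar p q) : 0 < Fn p s q := by
  rw [e2_affine h1 h2 h3]
  have ha := aa_pos h1 h2 h3; have hb := bb_pos h1 h2 h3
  apply mul_pos (by positivity) (by linarith)

lemma e2_anti {s t : ℝ} (h : s < t) : Fn p t q < Fn p s q := by
  rw [e2_affine h1 h2 h3, e2_affine h1 h2 h3]
  have ha := aa_pos h1 h2 h3; have hb := bb_pos h1 h2 h3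
  have : (0:ℝ) < (aa p q + bb p q) / 2 := by positivity
  nlinarith

lemma Dl_low {s : ℝ} (hsp : s ≤ p) : Dl p q s = Fn p s q := by
  have hc : max p (min s q) = p := by
    rw [max_eq_left]
    exact le_trans (min_le_left _ _) hsp
  rw [Dl, hc, Fn_self, max_eq_right, sub_zero]
  exact (e2_nonneg h1 h2 h3 (by linarith [sstar_gt h1 h2 h3]))

lemma Dl_mid {s : ℝ} (hps : p ≤ s) (hsq : s ≤ q) : Dl p q s = max 0 (Fn p s q) + hh p s := by
  have hc : max p (min s q) = s := by
    rw [min_eq_left hsq, max_eq_right hps]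
  rw [Dl, hc, hh]; ring

lemma Dl_high {s : ℝ} (hqs : q ≤ s) : Dl p q s = -(Fn p s q) := by
  have hc : max p (min s q) = q := by
    rw [min_eq_right hqs, max_eq_right h2.le]
  have hnp : Fn p s q ≤ 0 :=
    e2_nonpos h1 h2 h3 (le_trans (sstar_lt h1 h2 h3).le hqs)
  rw [Dl, hc, max_eq_left (by linarith)]; ring

lemma Dl_lt_right {t u : ℝ} (hst : sstar p q ≤ t) (hpt : p < t) (htu : t < u) (hu1 : u < 1) :
    Dl p q t < Dl p q u := by
  have hsq := sstar_lt h1 h2 h3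
  have hsp := sstar_gt h1 h2 h3
  have het : Fn p t q ≤ 0 := e2_nonpos h1 h2 h3 hst
  have heu : Fn p u q < 0 := e2_neg h1 h2 h3 (lt_of_le_of_lt hst htu)
  rcases le_or_gt u q with hc | hc
  · rw [Dl_mid h1 h2 h3 hpt.le (le_trans htu.le hc), Dl_mid h1 h2 h3 (by linarith) hc,
      max_eq_left het, max_eq_left heu.le, zero_add, zero_add]
    exact hh_strictMono h1 ⟨hpt.le, by linarith⟩ ⟨by linarith, hu1⟩ htu
  · rw [Dl_high h1 h2 h3 hc.le]
    rcases le_or_gt t q with hc2 | hc2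
    · rw [Dl_mid h1 h2 h3 hpt.le hc2, max_eq_left het, zero_add]
      have step1 : hh p t ≤ hh p q := by
        rcases eq_or_lt_of_le hc2 with rfl | hlt
        · exact le_refl _
        · exact (hh_strictMono h1 ⟨hpt.le, by linarith⟩ ⟨h2.le, h3⟩ hlt).le
      have step2 : -(Fn p q q) < -(Fn p u q) := by
        have := e2_anti h1 h2 h3 (s := q) (t := u) hc
        linarith
      have hhq : hh p q = -(Fn p q q) := rfl
      linarith [step1, step2, hhq]
    · rw [Dl_high h1 h2 h3 hc2.le]
      have := e2_anti h1 h2 h3 htu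
      linarith

lemma Dl_lt_left {t u : ℝ} (htu : t < u) (hus : u ≤ sstar p q) : Dl p q u < Dl p q t := by
  have hsq := sstar_lt h1 h2 h3
  have hsp := sstar_gt h1 h2 h3
  have heu : 0 ≤ Fn p u q := e2_nonneg h1 h2 h3 hus
  have huq : u < q := lt_of_le_of_lt hus hsq
  rcases le_or_gt p t with hc | hc
  · have hDu : Dl p q u = GG p q u := by
      rw [Dl_mid h1 h2 h3 (by linarith) huq.le, max_eq_right heu, GG]
    have hDt : GG p q t ≤ Dl p q t := by
      rw [Dl_mid h1 h2 h3 hc (by linarith), GG]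
      have : Fn p t q ≤ max 0 (Fn p t q) := le_max_right _ _
      linarith
    have : GG p q u < GG p q t :=
      GG_strictAnti h1 h2 h3 ⟨hc, by linarith⟩ ⟨by linarith, huq.le⟩ htu
    linarith
  · have hDt : Dl p q t = Fn p t q := Dl_low h1 h2 h3 hc.le
    rcases le_or_gt u p with hc2 | hc2
    · rw [Dl_low h1 h2 h3 hc2, hDt]
      exact e2_anti h1 h2 h3 htu
    · have hDu : Dl p q u = GG p q u := by
        rw [Dl_mid h1 h2 h3 hc2.le huq.le, max_eq_right heu, GG]
      have hGp : GG p q u < GG p q p :=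
        GG_strictAnti h1 h2 h3 ⟨le_refl _, h2.le⟩ ⟨hc2.le, huq.le⟩ hc2
      have hGpe : GG p q p = Fn p p q := by rw [GG, hh_self, add_zero]
      have : Fn p p q < Fn p t q := e2_anti h1 h2 h3 hc
      linarith
  end S2



theorem optimal_iff_isometric_on_boundary (ρ₁ ρ₂ α₀ : ℝ)
    (h1 : -1 < ρ₁) (h2 : ρ₁ < ρ₂) (h3 : ρ₂ < 1) (hα₀ : α₀ ∈ Set.Ioo 0 (π / 2)) :
    ((∀ α ∈ Set.Ioo 0 (π / 2), δ ρ₁ ρ₂ α₀ ρ₁ ≤ δ ρ₁ ρ₂ α ρ₁) ↔ L ρ₂ α₀ ρ₁ = 1) ∧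
    (L ρ₂ α₀ ρ₁ = 1 → ρ₁ < Real.sin α₀ ∧ Real.sin α₀ < ρ₂) := by
  have hpi := Real.pi_pos
  set s₀ := Real.sin α₀ with hs₀def
  have hq1 : -1 < ρ₂ := lt_trans h1 h2
  have hp1 : ρ₁ < 1 := lt_trans h2 h3
  have hs₀pos : 0 < s₀ := Real.sin_pos_of_pos_of_lt_pi hα₀.1 (by linarith [hα₀.2])
  have hs₀lt : s₀ < 1 := by
    have := Real.strictMonoOn_sin (a := α₀) (b := π/2)
      ⟨by linarith [hα₀.1], hα₀.2.le⟩ ⟨by linarith, le_refl _⟩ hα₀.2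
    simpa [Real.sin_pi_div_two] using this
  have hsp := sstar_gt h1 h2 h3
  have hsq := sstar_lt h1 h2 h3
  have hL : L ρ₂ α₀ ρ₁ = Real.exp (Fn ρ₁ s₀ ρ₂) := L_eq_exp α₀ h1 hp1 hq1 h3
  have hLiff : L ρ₂ α₀ ρ₁ = 1 ↔ s₀ = sstar ρ₁ ρ₂ := by
    rw [hL, Real.exp_eq_one_iff]
    constructor
    · intro h
      by_contra hne
      rcases lt_or_gt_of_ne hne with hlt | hgt
      · exact absurd h (ne_of_gt (e2_pos h1 h2 h3 hlt))
      · exact absurd h (ne_of_lt (e2_neg h1 h2 h3 hgt))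
    · intro h
      rw [h, e2_affine h1 h2 h3]
      simp
  have hDl : ∀ α : ℝ, δ ρ₁ ρ₂ α ρ₁ = Dl ρ₁ ρ₂ (Real.sin α) := by
    intro α
    rw [delta_eq h1 h2 h3 α]; rfl
  constructor
  · constructor
    · intro hmin
      rw [hLiff]
      by_contra hne
      rcases lt_or_gt_of_ne hne with hlt | hgt
      · have hst0 : 0 < sstar ρ₁ ρ₂ := lt_trans hs₀pos hlt
        have hst1 : sstar ρ₁ ρ₂ < 1 := lt_trans hsq h3
        have hmem : Real.arcsin (sstar ρ₁ ρ₂) ∈ Set.Ioo 0 (π/2) :=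
          ⟨Real.arcsin_pos.mpr hst0, Real.arcsin_lt_pi_div_two.mpr hst1⟩
        have hle := hmin _ hmem
        have hsin : Real.sin (Real.arcsin (sstar ρ₁ ρ₂)) = sstar ρ₁ ρ₂ :=
          Real.sin_arcsin (by linarith) hst1.le
        rw [hDl, hDl, hsin] at hle
        have hlt2 := Dl_lt_left h1 h2 h3 hlt (le_refl _)
        linarith
      · set t := max (sstar ρ₁ ρ₂) (s₀ / 2) with ht
        have hst : sstar ρ₁ ρ₂ ≤ t := le_max_left _ _
        have ht0 : 0 < t := lt_of_lt_of_le (by linarith) (le_max_right _ _)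
        have htu : t < s₀ := max_lt hgt (by linarith)
        have ht1 : t < 1 := lt_trans htu hs₀lt
        have hpt : ρ₁ < t := lt_of_lt_of_le hsp hst
        have hmem : Real.arcsin t ∈ Set.Ioo 0 (π/2) :=
          ⟨Real.arcsin_pos.mpr ht0, Real.arcsin_lt_pi_div_two.mpr ht1⟩
        have hle := hmin _ hmem
        have hsin : Real.sin (Real.arcsin t) = t := Real.sin_arcsin (by linarith) ht1.le
        rw [hDl, hDl, hsin] at hle
        have hlt2 := Dl_lt_right h1 h2 h3 hst hpt htu hs₀lt
        linarith
    · intro hLone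
      have hs0 : s₀ = sstar ρ₁ ρ₂ := hLiff.mp hLone
      intro α hα
      have hslt : Real.sin α < 1 := by
        have := Real.strictMonoOn_sin (a := α) (b := π/2)
          ⟨by linarith [hα.1], hα.2.le⟩ ⟨by linarith, le_refl _⟩ hα.2
        simpa [Real.sin_pi_div_two] using this
      rw [hDl, hDl]
      rcases lt_trichotomy (Real.sin α) s₀ with hlt | heq | hgt
      · exact (Dl_lt_left h1 h2 h3 hlt (le_of_eq hs0)).le
      · rw [heq]
      · refine (Dl_lt_right h1 h2 h3 (le_of_eq hs0.symm) ?_ hgt hslt).le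
        rw [hs0]; exact hsp
  · intro hLone
    have hs0 : s₀ = sstar ρ₁ ρ₂ := hLiff.mp hLone
    exact ⟨by rw [hs₀def] at hs0 ⊢; rw [hs0]; exact hsp, by rw [hs₀def] at hs0 ⊢; rw [hs0]; exact hsq⟩
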